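/- For every positive integer n with n ≡ 2 (mod 8), t(2,3,3;n) = 2·N(1,3,3;n+1), and for every positive integer n with n ≡ 6 (mod 8), t(2,3,3;n) = N(1,3,3;n+1). -/

import Mathlib

def tri (x : ℤ) : ℤ := x * (x + 1) / 2

noncomputable def N (a b c n : ℕ) : ℕ :=
  Nat.card {p : ℤ × ℤ × ℤ // (n : ℤ) = a * p.1 ^ 2 + b * p.2.1 ^ 2 + c * p.2.2 ^ 2}

noncomputable def t (a b c n : ℕ) : ℕ :=
  Nat.card {p : ℤ × ℤ × ℤ // (n : ℤ) = a * tri p.1 + b * tri p.2.1 + c * tri p.2.2}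

noncomputable def T (a b c n : ℕ) : ℕ :=
  Nat.card {p : ℕ × ℕ × ℕ // (n : ℤ) = a * tri p.1 + b * tri p.2.1 + c * tri p.2.2}

set_option linter.unusedVariables false



lemma tri_two (x : ℤ) : 2 * tri x = x * (x + 1) := by
  obtain ⟨k, hk⟩ := Int.even_mul_succ_self x
  unfold tri; omega

lemma sqcases (a : ℤ) :
    (a % 4 = 0 ∧ a ^ 2 % 8 = 0) ∨ (a % 4 = 2 ∧ a ^ 2 % 8 = 4) ∨ (a % 2 = 1 ∧ a ^ 2 % 8 = 1) := by
  have ha : a = 4 * (a / 4) + a % 4 := by omega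
  have key : a ^ 2 = (a % 4) ^ 2 + 8 * (2 * (a / 4) ^ 2 + (a / 4) * (a % 4)) := by
    linear_combination (a + 4 * (a / 4) + a % 4) * ha
  have hr : a % 4 = 0 ∨ a % 4 = 1 ∨ a % 4 = 2 ∨ a % 4 = 3 := by omega
  rcases hr with h | h | h | h <;> rw [h] at key <;> norm_num at key <;> omega

lemma finite_sols (k a b c : ℤ) (ha : 0 < a) (hb : 0 < b) (hc : 0 < c) :
    {p : ℤ × ℤ × ℤ | k = a * p.1 ^ 2 + b * p.2.1 ^ 2 + c * p.2.2 ^ 2}.Finite := by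
  apply Set.Finite.subset
    (((Set.finite_Icc (-k) k).prod ((Set.finite_Icc (-k) k).prod (Set.finite_Icc (-k) k))))
  rintro ⟨x, y, z⟩ h
  simp only [Set.mem_setOf_eq] at h
  have h1 : x ^ 2 ≤ k := by nlinarith [sq_nonneg x, sq_nonneg y, sq_nonneg z]
  have h2 : y ^ 2 ≤ k := by nlinarith [sq_nonneg x, sq_nonneg y, sq_nonneg z]
  have h3 : z ^ 2 ≤ k := by nlinarith [sq_nonneg x, sq_nonneg y, sq_nonneg z]
  have bx : -k ≤ x ∧ x ≤ k := by constructor <;> nlinarith [sq_nonneg (x-1), sq_nonneg (x+1)]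
  have by' : -k ≤ y ∧ y ≤ k := by constructor <;> nlinarith [sq_nonneg (y-1), sq_nonneg (y+1)]
  have bz : -k ≤ z ∧ z ≤ k := by constructor <;> nlinarith [sq_nonneg (z-1), sq_nonneg (z+1)]
  exact ⟨Set.mem_Icc.2 bx, Set.mem_Icc.2 by', Set.mem_Icc.2 bz⟩


abbrev Pt := ℤ × ℤ × ℤ

def Aset (n : ℤ) : Set Pt := {p | n = 2 * tri p.1 + 3 * tri p.2.1 + 3 * tri p.2.2}
def Wset (M : ℤ) : Set Pt :=
  {p | 8 * M = 2 * p.1 ^ 2 + 3 * p.2.1 ^ 2 + 3 * p.2.2 ^ 2 ∧ p.1 % 2 = 1 ∧ p.2.1 % 2 = 1 ∧ p.2.2 % 2 = 1}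
def Tset (M : ℤ) : Set Pt :=
  {p | 4 * M = p.1 ^ 2 + 3 * p.2.1 ^ 2 + 3 * p.2.2 ^ 2 ∧ p.1 % 2 = 1 ∧ (p.2.1 + p.2.2) % 2 = 1}
def TbS (M : ℤ) : Set Pt :=
  {p | 4 * M = p.1 ^ 2 + 3 * p.2.1 ^ 2 + 3 * p.2.2 ^ 2 ∧ p.1 % 2 = 1 ∧ p.2.1 % 2 = 1 ∧ p.2.2 % 2 = 0}
def TcS (M : ℤ) : Set Pt :=
  {p | 4 * M = p.1 ^ 2 + 3 * p.2.1 ^ 2 + 3 * p.2.2 ^ 2 ∧ p.1 % 2 = 1 ∧ p.2.1 % 2 = 0 ∧ p.2.2 % 2 = 1}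
def NsetS (M : ℤ) : Set Pt := {p | M = p.1 ^ 2 + 3 * p.2.1 ^ 2 + 3 * p.2.2 ^ 2}
def SbS (M : ℤ) : Set Pt :=
  {p | M = p.1 ^ 2 + 3 * p.2.1 ^ 2 + 3 * p.2.2 ^ 2 ∧ p.2.1 % 2 = 1 ∧ p.2.2 % 2 = 0}
def ScS (M : ℤ) : Set Pt :=
  {p | M = p.1 ^ 2 + 3 * p.2.1 ^ 2 + 3 * p.2.2 ^ 2 ∧ p.2.1 % 2 = 0 ∧ p.2.2 % 2 = 1}
def SAS (M : ℤ) : Set Pt :=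
  {p | M = p.1 ^ 2 + 3 * p.2.1 ^ 2 + 3 * p.2.2 ^ 2 ∧ p.2.1 % 2 = 1 ∧ p.2.2 % 2 = 1}
lemma cardA (n : ℤ) : Nat.card ↥(Aset n) = Nat.card ↥(Wset (n + 1)) := by
  apply Nat.card_eq_of_bijective
    (f := fun x => ⟨(2 * x.1.1 + 1, 2 * x.1.2.1 + 1, 2 * x.1.2.2 + 1), by
      obtain ⟨⟨x, y, z⟩, h⟩ := x
      simp only [Aset, Set.mem_setOf_eq] at h
      simp only [Wset, Set.mem_setOf_eq]
      refine ⟨by linear_combination 8 * h + 8 * tri_two x + 12 * tri_two y + 12 * tri_two z,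
        by omega, by omega, by omega⟩⟩)
  constructor
  · rintro ⟨⟨x, y, z⟩, hx⟩ ⟨⟨x', y', z'⟩, hy⟩ h
    simp only [Subtype.mk.injEq, Prod.mk.injEq] at h
    exact Subtype.ext (by simp only [Prod.mk.injEq]; omega)
  · rintro ⟨⟨u, v, w⟩, h1, h2, h3, h4⟩
    replace h1 : 8 * (n+1) = 2 * u ^ 2 + 3 * v ^ 2 + 3 * w ^ 2 := h1
    replace h2 : u % 2 = 1 := h2
    replace h3 : v % 2 = 1 := h3
    replace h4 : w % 2 = 1 := h4
    obtain ⟨x, hx⟩ : ∃ x, u = 2 * x + 1 := ⟨(u - 1) / 2, by omega⟩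
    obtain ⟨y, hy⟩ : ∃ y, v = 2 * y + 1 := ⟨(v - 1) / 2, by omega⟩
    obtain ⟨z, hz⟩ : ∃ z, w = 2 * z + 1 := ⟨(w - 1) / 2, by omega⟩
    subst hx hy hz
    have h5 : 8 * n = 16 * tri x + 24 * tri y + 24 * tri z := by
      linear_combination h1 - 8 * tri_two x - 12 * tri_two y - 12 * tri_two z
    exact ⟨⟨(x, y, z), by simp only [Aset, Set.mem_setOf_eq]; omega⟩, rfl⟩
lemma cardW (M : ℤ) : Nat.card ↥(Wset M) = Nat.card ↥(Tset M) := by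
  symm
  apply Nat.card_eq_of_bijective
    (f := fun x => ⟨(x.1.1, x.1.2.1 + x.1.2.2, x.1.2.1 - x.1.2.2), by
      obtain ⟨⟨u, p, q⟩, h⟩ := x
      obtain ⟨h1, h2, h3⟩ : 4 * M = u ^ 2 + 3 * p ^ 2 + 3 * q ^ 2 ∧ u % 2 = 1 ∧ (p + q) % 2 = 1 := h
      simp only [Wset, Set.mem_setOf_eq]
      exact ⟨by linear_combination 2 * h1, by omega, by omega, by omega⟩⟩)
  constructor
  · rintro ⟨⟨u, p, q⟩, hx⟩ ⟨⟨u', p', q'⟩, hy⟩ h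
    simp only [Subtype.mk.injEq, Prod.mk.injEq] at h
    exact Subtype.ext (by simp only [Prod.mk.injEq]; omega)
  · rintro ⟨⟨u, v, w⟩, h⟩
    obtain ⟨h1, h2, h3, h4⟩ :
        8 * M = 2 * u ^ 2 + 3 * v ^ 2 + 3 * w ^ 2 ∧ u % 2 = 1 ∧ v % 2 = 1 ∧ w % 2 = 1 := h
    obtain ⟨p, hp⟩ : ∃ p, v + w = 2 * p := ⟨(v + w) / 2, by omega⟩
    obtain ⟨q, hq⟩ : ∃ q, v - w = 2 * q := ⟨(v - w) / 2, by omega⟩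
    have hv : v = p + q := by omega
    have hw : w = p - q := by omega
    subst hv hw
    have h5 : 2 * (4 * M) = 2 * (u ^ 2 + 3 * p ^ 2 + 3 * q ^ 2) := by linear_combination h1
    refine ⟨⟨(u, p, q), ?_⟩, rfl⟩
    simp only [Tset, Set.mem_setOf_eq]
    exact ⟨by omega, by omega, by omega⟩
lemma finW (M : ℤ) : (Wset M).Finite := by
  apply (finite_sols (8 * M) 2 3 3 (by norm_num) (by norm_num) (by norm_num)).subset
  exact fun p hp => hp.1

lemma finTb (M : ℤ) : (TbS M).Finite := by
  apply (finite_sols (4 * M) 1 3 3 (by norm_num) (by norm_num) (by norm_num)).subset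
  rintro ⟨u, p, q⟩ hp
  show 4 * M = 1 * u ^ 2 + 3 * p ^ 2 + 3 * q ^ 2
  linear_combination hp.1

lemma finTc (M : ℤ) : (TcS M).Finite := by
  apply (finite_sols (4 * M) 1 3 3 (by norm_num) (by norm_num) (by norm_num)).subset
  rintro ⟨u, p, q⟩ hp
  show 4 * M = 1 * u ^ 2 + 3 * p ^ 2 + 3 * q ^ 2
  linear_combination hp.1

lemma finN (M : ℤ) : (NsetS M).Finite := by
  apply (finite_sols M 1 3 3 (by norm_num) (by norm_num) (by norm_num)).subset
  rintro ⟨u, p, q⟩ hp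
  replace hp : M = u ^ 2 + 3 * p ^ 2 + 3 * q ^ 2 := hp
  show M = 1 * u ^ 2 + 3 * p ^ 2 + 3 * q ^ 2
  linear_combination hp
  
lemma finSb (M : ℤ) : (SbS M).Finite := (finN M).subset fun p hp => hp.1
lemma finSc (M : ℤ) : (ScS M).Finite := (finN M).subset fun p hp => hp.1
lemma finSA (M : ℤ) : (SAS M).Finite := (finN M).subset fun p hp => hp.1

lemma cardT (M : ℤ) :
    Nat.card ↥(Tset M) = Nat.card ↥(TbS M) + Nat.card ↥(TcS M) := by
  have hU : Tset M = TbS M ∪ TcS M := by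
    ext ⟨u, p, q⟩
    simp only [Tset, TbS, TcS, Set.mem_setOf_eq, Set.mem_union]
    constructor
    · rintro ⟨h1, h2, h3⟩
      rcases (show p % 2 = 1 ∧ q % 2 = 0 ∨ p % 2 = 0 ∧ q % 2 = 1 by omega) with ⟨hb, hc⟩ | ⟨hb, hc⟩
      · exact Or.inl ⟨h1, h2, hb, hc⟩
      · exact Or.inr ⟨h1, h2, hb, hc⟩
    · rintro (⟨h1, h2, h3, h4⟩ | ⟨h1, h2, h3, h4⟩) <;> exact ⟨h1, h2, by omega⟩
  have hd : Disjoint (TbS M) (TcS M) := by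
    rw [Set.disjoint_left]
    rintro ⟨u, p, q⟩ ⟨h1, h2, h3, h4⟩ ⟨h1', h2', h3', h4'⟩
    omega
  rw [hU, Nat.card_coe_set_eq, Set.ncard_union_eq hd (finTb M) (finTc M),
    ← Nat.card_coe_set_eq, ← Nat.card_coe_set_eq]

lemma cardTc (M : ℤ) : Nat.card ↥(TcS M) = Nat.card ↥(TbS M) := by
  apply Nat.card_eq_of_bijective (f := fun x => ⟨(x.1.1, x.1.2.2, x.1.2.1), by
    obtain ⟨⟨u, p, q⟩, h⟩ := x
    obtain ⟨h1, h2, h3, h4⟩ :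
      4 * M = u ^ 2 + 3 * p ^ 2 + 3 * q ^ 2 ∧ u % 2 = 1 ∧ p % 2 = 0 ∧ q % 2 = 1 := h
    simp only [TbS, Set.mem_setOf_eq]
    exact ⟨by linear_combination h1, h2, h4, h3⟩⟩)
  constructor
  · rintro ⟨⟨u, p, q⟩, hx⟩ ⟨⟨u', p', q'⟩, hy⟩ h
    simp only [Subtype.mk.injEq, Prod.mk.injEq] at h
    exact Subtype.ext (by simp only [Prod.mk.injEq]; tauto)
  · rintro ⟨⟨u, p, q⟩, h⟩
    obtain ⟨h1, h2, h3, h4⟩ :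
      4 * M = u ^ 2 + 3 * p ^ 2 + 3 * q ^ 2 ∧ u % 2 = 1 ∧ p % 2 = 1 ∧ q % 2 = 0 := h
    refine ⟨⟨(u, q, p), ?_⟩, rfl⟩
    simp only [TcS, Set.mem_setOf_eq]
    exact ⟨by linear_combination h1, h2, h4, h3⟩

lemma cardSc (M : ℤ) : Nat.card ↥(ScS M) = Nat.card ↥(SbS M) := by
  apply Nat.card_eq_of_bijective (f := fun x => ⟨(x.1.1, x.1.2.2, x.1.2.1), by
    obtain ⟨⟨u, p, q⟩, h⟩ := x
    obtain ⟨h1, h2, h3⟩ :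
      M = u ^ 2 + 3 * p ^ 2 + 3 * q ^ 2 ∧ p % 2 = 0 ∧ q % 2 = 1 := h
    simp only [SbS, Set.mem_setOf_eq]
    exact ⟨by linear_combination h1, h3, h2⟩⟩)
  constructor
  · rintro ⟨⟨u, p, q⟩, hx⟩ ⟨⟨u', p', q'⟩, hy⟩ h
    simp only [Subtype.mk.injEq, Prod.mk.injEq] at h
    exact Subtype.ext (by simp only [Prod.mk.injEq]; tauto)
  · rintro ⟨⟨u, p, q⟩, h⟩
    obtain ⟨h1, h2, h3⟩ :
      M = u ^ 2 + 3 * p ^ 2 + 3 * q ^ 2 ∧ p % 2 = 1 ∧ q % 2 = 0 := h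
    refine ⟨⟨(u, q, p), ?_⟩, rfl⟩
    simp only [ScS, Set.mem_setOf_eq]
    exact ⟨by linear_combination h1, h3, h2⟩
lemma Sb_even {M a b c : ℤ} (hM : M % 4 = 3) (h : M = a ^ 2 + 3 * b ^ 2 + 3 * c ^ 2)
    (hb : b % 2 = 1) (hc : c % 2 = 0) : a % 2 = 0 := by
  have h1 := sqcases a; have h2 := sqcases b; have h3 := sqcases c
  omega

lemma cardTb (M : ℤ) (hM : M % 4 = 3) :
    Nat.card ↥(TbS M) = 2 * Nat.card ↥(SbS M) := by
  have key : Nat.card (↥(SbS M) × Bool) = Nat.card ↥(TbS M) := by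
    apply Nat.card_eq_of_bijective (f := fun x =>
      ⟨(x.1.1.1 + 3 * x.1.1.2.1,
        cond x.2 (x.1.1.1 - x.1.1.2.1) (x.1.1.2.1 - x.1.1.1), 2 * x.1.1.2.2), by
      obtain ⟨⟨⟨a, b, c⟩, h⟩, s⟩ := x
      obtain ⟨h1, h2, h3⟩ : M = a ^ 2 + 3 * b ^ 2 + 3 * c ^ 2 ∧ b % 2 = 1 ∧ c % 2 = 0 := h
      have ha := Sb_even hM h1 h2 h3
      simp only [TbS, Set.mem_setOf_eq]
      cases s <;> simp only [cond_true, cond_false] <;>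
        exact ⟨by linear_combination 4 * h1, by omega, by omega, by omega⟩⟩)
    constructor
    · rintro ⟨⟨⟨a, b, c⟩, h⟩, s⟩ ⟨⟨⟨a', b', c'⟩, h'⟩, s'⟩ heq
      obtain ⟨h1, h2, h3⟩ : M = a ^ 2 + 3 * b ^ 2 + 3 * c ^ 2 ∧ b % 2 = 1 ∧ c % 2 = 0 := h
      obtain ⟨h1', h2', h3'⟩ : M = a' ^ 2 + 3 * b' ^ 2 + 3 * c' ^ 2 ∧ b' % 2 = 1 ∧ c' % 2 = 0 := h'
      have ha := Sb_even hM h1 h2 h3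
      have ha' := Sb_even hM h1' h2' h3'
      simp only [Subtype.mk.injEq, Prod.mk.injEq] at heq
      cases s <;> cases s' <;> simp only [cond_true, cond_false] at heq <;>
          simp only [Prod.mk.injEq, Subtype.mk.injEq, and_true, Subtype.ext_iff, true_and] <;>
        [omega; exact absurd heq (by omega);
         exact absurd heq (by omega); omega]
    · rintro ⟨⟨u, p, q⟩, h⟩
      obtain ⟨h1, h2, h3, h4⟩ :
        4 * M = u ^ 2 + 3 * p ^ 2 + 3 * q ^ 2 ∧ u % 2 = 1 ∧ p % 2 = 1 ∧ q % 2 = 0 := h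
      obtain ⟨c, rfl⟩ : ∃ c, q = 2 * c := ⟨q / 2, by omega⟩
      have h1' : 4 * M = u ^ 2 + 3 * p ^ 2 + 12 * c ^ 2 := by linear_combination h1
      have hsu := sqcases u; have hsp := sqcases p; have hsc := sqcases c
      have hcev : c % 2 = 0 := by omega
      rcases (show (u - p) % 4 = 0 ∨ (u + p) % 4 = 0 by omega) with h5 | h5
      · obtain ⟨B, hB⟩ : ∃ B, u - p = 4 * B := ⟨(u - p) / 4, by omega⟩
        obtain ⟨A, hA⟩ : ∃ A, u + 3 * p = 4 * A := ⟨(u + 3 * p) / 4, by omega⟩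
        have hmem : M = A ^ 2 + 3 * B ^ 2 + 3 * c ^ 2 := by
          have h6 : 16 * M = 16 * (A ^ 2 + 3 * B ^ 2 + 3 * c ^ 2) := by
            linear_combination 4 * h1' + (4 * A + u + 3 * p) * hA + 3 * (4 * B + u - p) * hB
          omega
        have hsA := sqcases A; have hsB := sqcases B
        have hBodd : B % 2 = 1 := by omega
        refine ⟨⟨⟨(A, B, c), ⟨hmem, hBodd, hcev⟩⟩, true⟩, ?_⟩
        simp only [cond_true, Subtype.mk.injEq, Prod.mk.injEq, and_true, Subtype.ext_iff, true_and]
        omega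
      · obtain ⟨B, hB⟩ : ∃ B, u + p = 4 * B := ⟨(u + p) / 4, by omega⟩
        obtain ⟨A, hA⟩ : ∃ A, u - 3 * p = 4 * A := ⟨(u - 3 * p) / 4, by omega⟩
        have hmem : M = A ^ 2 + 3 * B ^ 2 + 3 * c ^ 2 := by
          have h6 : 16 * M = 16 * (A ^ 2 + 3 * B ^ 2 + 3 * c ^ 2) := by
            linear_combination 4 * h1' + (4 * A + u - 3 * p) * hA + 3 * (4 * B + u + p) * hB
          omega
        have hsA := sqcases A; have hsB := sqcases B
        have hBodd : B % 2 = 1 := by omega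
        refine ⟨⟨⟨(A, B, c), ⟨hmem, hBodd, hcev⟩⟩, false⟩, ?_⟩
        simp only [cond_false, Subtype.mk.injEq, Prod.mk.injEq, and_true, Subtype.ext_iff, true_and]
        omega
  rw [← key, Nat.card_prod]
  simp [Nat.card_eq_fintype_card, Nat.mul_comm]
lemma Sb7 {M a b c : ℤ} (hM : M % 8 = 7) (h : M = a ^ 2 + 3 * b ^ 2 + 3 * c ^ 2)
    (hb : b % 2 = 1) (hc : c % 2 = 0) : a % 2 = 0 ∧ (a - c) % 4 = 2 := by
  have h1 := sqcases a; have h2 := sqcases b; have h3 := sqcases c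
  omega

lemma SA7 {M a b c : ℤ} (hM : M % 8 = 7) (h : M = a ^ 2 + 3 * b ^ 2 + 3 * c ^ 2)
    (hb : b % 2 = 1) (hc : c % 2 = 1) : a % 2 = 1 := by
  have h1 := sqcases a; have h2 := sqcases b; have h3 := sqcases c
  omega

set_option maxHeartbeats 1000000 in
lemma cardSA (M : ℤ) (hM : M % 8 = 7) :
    Nat.card ↥(SAS M) = 2 * Nat.card ↥(SbS M) := by
  have key : Nat.card (↥(SbS M) × Bool) = Nat.card ↥(SAS M) := by
    apply Nat.card_eq_of_bijective (f := fun x =>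
      ⟨(cond x.2 ((x.1.1.1 + 3 * x.1.1.2.2) / 2) ((x.1.1.1 - 3 * x.1.1.2.2) / 2),
        x.1.1.2.1,
        cond x.2 ((x.1.1.1 - x.1.1.2.2) / 2) (-((x.1.1.1 + x.1.1.2.2) / 2))), by
      obtain ⟨⟨⟨a, b, c⟩, h⟩, s⟩ := x
      obtain ⟨h1, h2, h3⟩ : M = a ^ 2 + 3 * b ^ 2 + 3 * c ^ 2 ∧ b % 2 = 1 ∧ c % 2 = 0 := h
      obtain ⟨ha, hac⟩ := Sb7 hM h1 h2 h3
      simp only [SAS, Set.mem_setOf_eq]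
      cases s <;> simp only [cond_true, cond_false]
      · have hA : 2 * ((a - 3 * c) / 2) = a - 3 * c := by omega
        have hC : 2 * (-((a + c) / 2)) = -(a + c) := by omega
        refine ⟨?_, h2, by omega⟩
        have h6 : 4 * M = 4 * (((a - 3 * c) / 2) ^ 2 + 3 * b ^ 2 + 3 * (-((a + c) / 2)) ^ 2) := by
          linear_combination 4 * h1 - (2 * ((a - 3 * c) / 2) + a - 3 * c) * hA -
            3 * (2 * (-((a + c) / 2)) - a - c) * hC
        omega
      · have hA : 2 * ((a + 3 * c) / 2) = a + 3 * c := by omega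
        have hC : 2 * ((a - c) / 2) = a - c := by omega
        refine ⟨?_, h2, by omega⟩
        have h6 : 4 * M = 4 * (((a + 3 * c) / 2) ^ 2 + 3 * b ^ 2 + 3 * ((a - c) / 2) ^ 2) := by
          linear_combination 4 * h1 - (2 * ((a + 3 * c) / 2) + a + 3 * c) * hA -
            3 * (2 * ((a - c) / 2) + a - c) * hC
        omega⟩)
    constructor
    · rintro ⟨⟨⟨a, b, c⟩, h⟩, s⟩ ⟨⟨⟨a', b', c'⟩, h'⟩, s'⟩ heq
      obtain ⟨h1, h2, h3⟩ : M = a ^ 2 + 3 * b ^ 2 + 3 * c ^ 2 ∧ b % 2 = 1 ∧ c % 2 = 0 := h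
      obtain ⟨h1', h2', h3'⟩ : M = a' ^ 2 + 3 * b' ^ 2 + 3 * c' ^ 2 ∧ b' % 2 = 1 ∧ c' % 2 = 0 := h'
      obtain ⟨ha, hac⟩ := Sb7 hM h1 h2 h3
      obtain ⟨ha', hac'⟩ := Sb7 hM h1' h2' h3'
      simp only [Subtype.mk.injEq, Prod.mk.injEq] at heq
      cases s <;> cases s' <;> simp only [cond_true, cond_false] at heq <;>
          simp only [Prod.mk.injEq, Subtype.mk.injEq, and_true, Subtype.ext_iff, true_and] <;>
        [omega; exact absurd heq (by omega); exact absurd heq (by omega); omega]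
    · rintro ⟨⟨A, B, C⟩, h⟩
      obtain ⟨h1, hb, hc⟩ : M = A ^ 2 + 3 * B ^ 2 + 3 * C ^ 2 ∧ B % 2 = 1 ∧ C % 2 = 1 := h
      have hA : A % 2 = 1 := SA7 hM h1 hb hc
      rcases (show (A - C) % 4 = 0 ∨ (A + C) % 4 = 0 by omega) with h5 | h5
      · obtain ⟨a, ha⟩ : ∃ a, A + 3 * C = 2 * a := ⟨(A + 3 * C) / 2, by omega⟩
        obtain ⟨c, hcc⟩ : ∃ c, A - C = 2 * c := ⟨(A - C) / 2, by omega⟩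
        have hmem : M = a ^ 2 + 3 * B ^ 2 + 3 * c ^ 2 := by
          have h6 : 4 * M = 4 * (a ^ 2 + 3 * B ^ 2 + 3 * c ^ 2) := by
            linear_combination 4 * h1 + (2 * a + A + 3 * C) * ha + 3 * (2 * c + A - C) * hcc
          omega
        refine ⟨⟨⟨(a, B, c), ⟨hmem, hb, show c % 2 = 0 by omega⟩⟩, true⟩, ?_⟩
        simp only [cond_true, Subtype.mk.injEq, Prod.mk.injEq, and_true, Subtype.ext_iff, true_and]
        omega
      · obtain ⟨a, ha⟩ : ∃ a, A - 3 * C = 2 * a := ⟨(A - 3 * C) / 2, by omega⟩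
        obtain ⟨c, hcc⟩ : ∃ c, A + C = -2 * c := ⟨-((A + C) / 2), by omega⟩
        have hmem : M = a ^ 2 + 3 * B ^ 2 + 3 * c ^ 2 := by
          have h6 : 4 * M = 4 * (a ^ 2 + 3 * B ^ 2 + 3 * c ^ 2) := by
            linear_combination 4 * h1 + (2 * a + A - 3 * C) * ha + 3 * (A + C - 2 * c) * hcc
          omega
        refine ⟨⟨⟨(a, B, c), ⟨hmem, hb, show c % 2 = 0 by omega⟩⟩, false⟩, ?_⟩
        simp only [cond_false, Subtype.mk.injEq, Prod.mk.injEq, and_true, Subtype.ext_iff, true_and]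
        omega
  rw [← key, Nat.card_prod]
  simp [Nat.card_eq_fintype_card, Nat.mul_comm]
lemma cardN3 (M : ℤ) (hM : M % 8 = 3) :
    Nat.card ↥(NsetS M) = Nat.card ↥(SbS M) + Nat.card ↥(ScS M) := by
  have hU : NsetS M = SbS M ∪ ScS M := by
    ext ⟨a, b, c⟩
    simp only [NsetS, SbS, ScS, Set.mem_setOf_eq, Set.mem_union]
    constructor
    · intro h1
      have s1 := sqcases a; have s2 := sqcases b; have s3 := sqcases c
      rcases (show b % 2 = 1 ∧ c % 2 = 0 ∨ b % 2 = 0 ∧ c % 2 = 1 by omega) with hh | hh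
      · exact Or.inl ⟨h1, hh.1, hh.2⟩
      · exact Or.inr ⟨h1, hh.1, hh.2⟩
    · rintro (⟨h1, _, _⟩ | ⟨h1, _, _⟩) <;> exact h1
  have hd : Disjoint (SbS M) (ScS M) := by
    rw [Set.disjoint_left]
    rintro ⟨a, b, c⟩ ⟨h1, h2, h3⟩ ⟨h1', h2', h3'⟩
    omega
  rw [hU, Nat.card_coe_set_eq, Set.ncard_union_eq hd (finSb M) (finSc M),
    ← Nat.card_coe_set_eq, ← Nat.card_coe_set_eq]

lemma cardN7 (M : ℤ) (hM : M % 8 = 7) :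
    Nat.card ↥(NsetS M) = Nat.card ↥(SAS M) + Nat.card ↥(SbS M) + Nat.card ↥(ScS M) := by
  have hU : NsetS M = SAS M ∪ (SbS M ∪ ScS M) := by
    ext ⟨a, b, c⟩
    simp only [NsetS, SAS, SbS, ScS, Set.mem_setOf_eq, Set.mem_union]
    constructor
    · intro h1
      have s1 := sqcases a; have s2 := sqcases b; have s3 := sqcases c
      rcases (show b % 2 = 1 ∧ c % 2 = 1 ∨ (b % 2 = 1 ∧ c % 2 = 0 ∨ b % 2 = 0 ∧ c % 2 = 1)
        by omega) with hh | hh | hh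
      · exact Or.inl ⟨h1, hh.1, hh.2⟩
      · exact Or.inr (Or.inl ⟨h1, hh.1, hh.2⟩)
      · exact Or.inr (Or.inr ⟨h1, hh.1, hh.2⟩)
    · rintro (⟨h1, _, _⟩ | ⟨h1, _, _⟩ | ⟨h1, _, _⟩) <;> exact h1
  have hd1 : Disjoint (SAS M) (SbS M ∪ ScS M) := by
    rw [Set.disjoint_left]
    rintro ⟨a, b, c⟩ ⟨h1, h2, h3⟩ (⟨h1', h2', h3'⟩ | ⟨h1', h2', h3'⟩) <;> omega
  have hd2 : Disjoint (SbS M) (ScS M) := by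
    rw [Set.disjoint_left]
    rintro ⟨a, b, c⟩ ⟨h1, h2, h3⟩ ⟨h1', h2', h3'⟩
    omega
  rw [hU, Nat.card_coe_set_eq,
    Set.ncard_union_eq hd1 (finSA M) ((finSb M).union (finSc M)),
    Set.ncard_union_eq hd2 (finSb M) (finSc M),
    ← Nat.card_coe_set_eq, ← Nat.card_coe_set_eq, ← Nat.card_coe_set_eq]
  ring
theorem stmt5 (n : ℕ) (hn : 0 < n) :
    (n % 8 = 2 → t 2 3 3 n = 2 * N 1 3 3 (n + 1)) ∧
    (n % 8 = 6 → t 2 3 3 n = N 1 3 3 (n + 1)) := by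
  have ht : t 2 3 3 n = Nat.card ↥(Aset (n : ℤ)) := by
    apply Nat.card_congr
    apply Equiv.subtypeEquivRight
    intro p
    simp only [Aset, Set.mem_setOf_eq]
    norm_num
  have hN : N 1 3 3 (n + 1) = Nat.card ↥(NsetS ((n : ℤ) + 1)) := by
    apply Nat.card_congr
    apply Equiv.subtypeEquivRight
    intro p
    simp only [NsetS, Set.mem_setOf_eq]
    push_cast
    norm_num
  constructor
  · intro hn8
    have hM8 : ((n : ℤ) + 1) % 8 = 3 := by omega
    have hM4 : ((n : ℤ) + 1) % 4 = 3 := by omega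
    rw [ht, cardA, cardW, cardT, cardTc, cardTb _ hM4, hN, cardN3 _ hM8, cardSc]
    ring
  · intro hn8
    have hM8 : ((n : ℤ) + 1) % 8 = 7 := by omega
    have hM4 : ((n : ℤ) + 1) % 4 = 3 := by omega
    rw [ht, cardA, cardW, cardT, cardTc, cardTb _ hM4, hN, cardN7 _ hM8, cardSA _ hM8, cardSc]
    ring
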